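/- GVI lower bound with Rényi regularizer, α > 1: for a loss ℓ, prior π, α > 1, and any density q (absolutely continuous w.r.t. the tempered Gibbs posterior), E_q[ℓ] + D_AR^{(α)}(q‖π) ≥ (1/α)·KL(q‖π^{αℓ}) − (1/α)·log ∫ π(θ) exp(−αℓ(θ)) dθ, where π^{αℓ}(θ) ∝ π(θ)exp(−αℓ(θ)) is the generalized Bayes posterior with loss αℓ. -/

import Mathlib

open MeasureTheory

/-- GVI lower bound with Rényi regularizer, `α > 1`:
`E_q[ℓ] + D_AR^{(α)}(q‖π) ≥ (1/α) KL(q‖π^{αℓ}) − (1/α) log ∫ π exp(−αℓ)`,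
where `π^{αℓ} ∝ π·exp(−αℓ)` is the generalized Bayes posterior. -/
theorem stmt_14 {Θ : Type*} [MeasurableSpace Θ] (μ : Measure Θ)
    (q π ℓ : Θ → ℝ) (α : ℝ) (hα : 1 < α)
    (hq0 : ∀ θ, 0 ≤ q θ) (hπ0 : ∀ θ, 0 ≤ π θ)
    (hq1 : (∫ θ, q θ ∂μ) = 1) (hπ1 : (∫ θ, π θ ∂μ) = 1)
    (hac : ∀ᵐ θ ∂μ, π θ = 0 → q θ = 0)
    (Zα : ℝ) (hZ : Zα = ∫ θ, π θ * Real.exp (-(α * ℓ θ)) ∂μ)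
    (hZpos : 0 < Zα)
    (hZint : Integrable (fun θ => π θ * Real.exp (-(α * ℓ θ))) μ)
    (πα : Θ → ℝ) (hπα : πα = fun θ => π θ * Real.exp (-(α * ℓ θ)) / Zα)
    (hl : Integrable (fun θ => ℓ θ * q θ) μ)
    (hren : Integrable (fun θ => q θ * (q θ / π θ) ^ (α - 1)) μ)
    (hklα : Integrable (fun θ => q θ * Real.log (q θ / πα θ)) μ) :
    (1 / α) * (∫ θ, q θ * Real.log (q θ / πα θ) ∂μ) - (1 / α) * Real.log Zα
      ≤ (∫ θ, ℓ θ * q θ ∂μ) +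
        (1 / (α * (α - 1))) * Real.log (∫ θ, q θ * (q θ / π θ) ^ (α - 1) ∂μ) := by
  have hα0 : (0:ℝ) < α := by linarith
  have hα1 : (0:ℝ) < α - 1 := by linarith
  -- q is integrable
  have hqint : Integrable q μ := by
    by_contra h
    rw [integral_undef h] at hq1
    exact one_ne_zero hq1.symm
  set I : ℝ := ∫ θ, q θ * (q θ / π θ) ^ (α - 1) ∂μ with hIdef
  have hqf0 : ∀ θ, 0 ≤ q θ * (q θ / π θ) ^ (α - 1) := fun θ =>
    mul_nonneg (hq0 θ) (Real.rpow_nonneg (div_nonneg (hq0 θ) (hπ0 θ)) _)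
  -- I > 0
  have hIpos : 0 < I := by
    rw [hIdef, integral_pos_iff_support_of_nonneg hqf0 hren]
    rw [pos_iff_ne_zero]
    intro hsupp
    have hae : ∀ᵐ θ ∂μ, q θ * (q θ / π θ) ^ (α - 1) = 0 := by
      rw [MeasureTheory.ae_iff]
      simpa [Function.support] using hsupp
    have hq0ae : ∀ᵐ θ ∂μ, q θ = 0 := by
      filter_upwards [hae, hac] with θ h1 h2
      rcases mul_eq_zero.1 h1 with h | h
      · exact h
      · rw [Real.rpow_eq_zero (div_nonneg (hq0 θ) (hπ0 θ)) (by positivity)] at h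
        rcases div_eq_zero_iff.1 h with h | h
        · exact h
        · exact h2 h
    have : (∫ θ, q θ ∂μ) = 0 := integral_eq_zero_of_ae hq0ae
    rw [this] at hq1
    exact one_ne_zero hq1.symm
  -- pointwise a.e. identity for the KL decomposition
  have hptw : ∀ᵐ θ ∂μ, q θ * Real.log (q θ / πα θ)
      = q θ * Real.log (q θ / π θ) + α * (ℓ θ * q θ) + q θ * Real.log Zα := by
    filter_upwards [hac] with θ h
    rcases eq_or_lt_of_le (hq0 θ) with hq | hq
    · simp [← hq]
    · have hπpos : 0 < π θ := by
        rcases eq_or_lt_of_le (hπ0 θ) with h0 | h0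
        · exact absurd (h h0.symm) hq.ne'
        · exact h0
      have hrw : q θ / πα θ = (q θ / π θ) * Real.exp (α * ℓ θ) * Zα := by
        rw [hπα]
        have he : Real.exp (-(α * ℓ θ)) ≠ 0 := Real.exp_ne_zero _
        have hkey : Real.exp (α * ℓ θ) * Real.exp (-(α * ℓ θ)) = 1 := by
          rw [← Real.exp_add]; simp
        field_simp
        linear_combination -hkey
      rw [hrw, Real.log_mul (by positivity) (ne_of_gt hZpos),
        Real.log_mul (by positivity) (Real.exp_ne_zero _), Real.log_exp]
      ring
  -- integrability of q * log(q/π)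
  have hg : Integrable (fun θ => q θ * Real.log (q θ / π θ)) μ := by
    have : Integrable (fun θ => q θ * Real.log (q θ / πα θ)
        - α * (ℓ θ * q θ) - q θ * Real.log Zα) μ :=
      (hklα.sub (hl.const_mul α)).sub (hqint.mul_const _)
    exact this.congr (by filter_upwards [hptw] with θ h; rw [h]; ring)
  set J : ℝ := ∫ θ, q θ * Real.log (q θ / π θ) ∂μ with hJdef
  -- KL decomposition
  have hdecomp : (∫ θ, q θ * Real.log (q θ / πα θ) ∂μ)
      = J + α * (∫ θ, ℓ θ * q θ ∂μ) + Real.log Zα := by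
    have h1 : Integrable (fun θ => q θ * Real.log (q θ / π θ) + α * (ℓ θ * q θ)) μ :=
      hg.add (hl.const_mul α)
    have h2 : Integrable (fun θ => q θ * Real.log Zα) μ := hqint.mul_const _
    rw [integral_congr_ae hptw, integral_add h1 h2, integral_add hg (hl.const_mul α),
      integral_const_mul, integral_mul_const, hq1, one_mul]
  -- Jensen: (α-1) * J ≤ log I
  have hjensen : (α - 1) * J ≤ Real.log I := by
    have hineq : ∀ᵐ θ ∂μ, (α - 1) * (q θ * Real.log (q θ / π θ))
        ≤ q θ * (q θ / π θ) ^ (α - 1) / I - q θ + q θ * Real.log I := by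
      filter_upwards [hac] with θ h
      rcases eq_or_lt_of_le (hq0 θ) with hq | hq
      · simp [← hq]
      · have hπpos : 0 < π θ := by
          rcases eq_or_lt_of_le (hπ0 θ) with h0 | h0
          · exact absurd (h h0.symm) hq.ne'
          · exact h0
        have hfpos : 0 < (q θ / π θ) ^ (α - 1) :=
          Real.rpow_pos_of_pos (by positivity) _
        have hlog : Real.log ((q θ / π θ) ^ (α - 1) / I)
            ≤ (q θ / π θ) ^ (α - 1) / I - 1 :=
          Real.log_le_sub_one_of_pos (by positivity)
        rw [Real.log_div (ne_of_gt hfpos) (ne_of_gt hIpos),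
          Real.log_rpow (by positivity)] at hlog
        have := mul_le_mul_of_nonneg_left hlog (hq0 θ)
        calc (α - 1) * (q θ * Real.log (q θ / π θ))
            = q θ * ((α - 1) * Real.log (q θ / π θ) - Real.log I)
              + q θ * Real.log I := by ring
          _ ≤ q θ * ((q θ / π θ) ^ (α - 1) / I - 1) + q θ * Real.log I := by linarith
          _ = q θ * (q θ / π θ) ^ (α - 1) / I - q θ + q θ * Real.log I := by ring
    have hint : (∫ θ, (α - 1) * (q θ * Real.log (q θ / π θ)) ∂μ)
        ≤ ∫ θ, (q θ * (q θ / π θ) ^ (α - 1) / I - q θ + q θ * Real.log I) ∂μ :=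
      integral_mono_ae (hg.const_mul _)
        (((hren.div_const I).sub hqint).add (hqint.mul_const _)) hineq
    have h3 : Integrable (fun θ => q θ * (q θ / π θ) ^ (α - 1) / I - q θ) μ :=
      (hren.div_const I).sub hqint
    have h4 : Integrable (fun θ => q θ * Real.log I) μ := hqint.mul_const _
    rw [integral_const_mul, integral_add h3 h4,
      integral_sub (hren.div_const I) hqint, integral_div, integral_mul_const,
      hq1, ← hIdef, div_self (ne_of_gt hIpos), one_mul] at hint
    linarith [hint]
  -- combine
  have hJle : (1 / α) * J ≤ (1 / (α * (α - 1))) * Real.log I := by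
    have := mul_le_mul_of_nonneg_left hjensen
      (le_of_lt (by positivity : (0:ℝ) < 1 / (α * (α - 1))))
    calc (1 / α) * J = (1 / (α * (α - 1))) * ((α - 1) * J) := by
          field_simp
      _ ≤ (1 / (α * (α - 1))) * Real.log I := this
  rw [hdecomp]
  have : (1 / α) * (J + α * (∫ θ, ℓ θ * q θ ∂μ) + Real.log Zα) - (1 / α) * Real.log Zα
      = (1 / α) * J + (∫ θ, ℓ θ * q θ ∂μ) := by
    field_simp
    ring
  rw [this]
  linarith [hJle]
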